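/- Let f : ℝⁿ → ℝ be D-Lipschitz with D ≥ 0, and let μ > 0. Then for every x ∈ ℝⁿ, the expected norm of the gradient-free oracle is bounded: ∫ ‖((f(x + μξ) − f(x))/μ)·ξ‖ dγ(ξ) ≤ D·n. -/

import Mathlib

open MeasureTheory ProbabilityTheory
open Real Filter Set
open scoped NNReal ENNReal

lemma integrable_sq_exp : Integrable (fun x : ℝ => x ^ 2 * rexp (-(1/2 : ℝ) * x ^ 2)) := by
  have h := integrable_rpow_mul_exp_neg_mul_sq (by norm_num : (0:ℝ) < 1/2) (by norm_num : (-1:ℝ) < 2)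
  refine h.congr (Filter.Eventually.of_forall fun x => ?_)
  norm_num [Real.rpow_natCast]

lemma integral_sq_exp : ∫ x : ℝ, x ^ 2 * rexp (-(1/2 : ℝ) * x ^ 2) = Real.sqrt (2 * π) := by
  have hu : ∀ x : ℝ, HasDerivAt (fun y : ℝ => y) (1 : ℝ) x := fun x => hasDerivAt_id x
  have hv : ∀ x : ℝ, HasDerivAt (fun y : ℝ => -rexp (-(1/2 : ℝ) * y ^ 2))
      (x * rexp (-(1/2 : ℝ) * x ^ 2)) x := by
    intro x
    have h1 : HasDerivAt (fun y : ℝ => -(1/2 : ℝ) * y ^ 2) (-(1/2 : ℝ) * (2 * x)) x := by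
      simpa using ((hasDerivAt_pow 2 x).const_mul (-(1/2 : ℝ)))
    have h2 := (h1.exp).neg
    rw [show x * rexp (-(1/2 : ℝ) * x ^ 2) = -(rexp (-(1/2 : ℝ) * x ^ 2) * (-(1/2 : ℝ) * (2 * x))) by ring]
    exact h2
  have huv' : Integrable ((fun y : ℝ => y) * fun x => x * rexp (-(1/2 : ℝ) * x ^ 2)) := by
    refine integrable_sq_exp.congr (Filter.Eventually.of_forall fun x => ?_)
    simp [Pi.mul_apply]; ring
  have hu'v : Integrable ((fun _ : ℝ => (1:ℝ)) * fun y : ℝ => -rexp (-(1/2 : ℝ) * y ^ 2)) := by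
    refine (integrable_exp_neg_mul_sq (by norm_num : (0:ℝ) < 1/2)).neg.congr (Filter.Eventually.of_forall fun x => ?_)
    simp [Pi.mul_apply]
  have huv : Integrable ((fun y : ℝ => y) * fun y : ℝ => -rexp (-(1/2 : ℝ) * y ^ 2)) := by
    refine (integrable_mul_exp_neg_mul_sq (by norm_num : (0:ℝ) < 1/2)).neg.congr (Filter.Eventually.of_forall fun x => ?_)
    simp [Pi.mul_apply]
  have key := integral_mul_deriv_eq_deriv_mul_of_integrable (fun x _ => hu x) (fun x _ => hv x) huv' hu'v huv
  simp only [one_mul, integral_neg, neg_neg] at key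
  have : ∫ x : ℝ, x * (x * rexp (-(1/2 : ℝ) * x ^ 2)) = ∫ x : ℝ, x ^ 2 * rexp (-(1/2:ℝ) * x ^ 2) := by
    congr 1; funext x; ring
  rw [this] at key
  rw [key, integral_gaussian]
  rw [show (π / (1/2 : ℝ)) = 2 * π by ring]

lemma gaussianPDF_eq_nnreal (x : ℝ) :
    gaussianPDF 0 1 x = ((Real.toNNReal (gaussianPDFReal 0 1 x) : ℝ≥0) : ℝ≥0∞) := rfl

lemma pdfReal_smul (g : ℝ → ℝ) (x : ℝ) :
    (Real.toNNReal (gaussianPDFReal 0 1 x)) • g x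
      = (Real.sqrt (2 * π))⁻¹ * (g x * rexp (-(1/2 : ℝ) * x ^ 2)) := by
  have h0 : (0:ℝ) ≤ gaussianPDFReal 0 1 x := gaussianPDFReal_nonneg _ _ _
  rw [NNReal.smul_def, smul_eq_mul, Real.coe_toNNReal _ h0]
  simp only [gaussianPDFReal]
  push_cast
  rw [mul_one]
  rw [show -(x - 0) ^ 2 / (2 * 1) = -(1/2:ℝ) * x ^ 2 by ring]
  ring

lemma integrable_sq_gaussian : Integrable (fun x : ℝ => x ^ 2) (gaussianReal 0 1) := by
  rw [gaussianReal_of_var_ne_zero 0 one_ne_zero]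
  have : (gaussianPDF 0 1) = fun x => ((Real.toNNReal (gaussianPDFReal 0 1 x) : ℝ≥0) : ℝ≥0∞) := rfl
  rw [this, integrable_withDensity_iff_integrable_smul]
  · refine ((integrable_sq_exp.const_mul ((Real.sqrt (2 * π))⁻¹)).congr
      (Filter.Eventually.of_forall fun x => ?_))
    exact (pdfReal_smul (fun y => y ^ 2) x).symm
  · exact (measurable_gaussianPDFReal 0 1).real_toNNReal

lemma integral_sq_gaussian : ∫ x, x ^ 2 ∂(gaussianReal 0 1) = 1 := by
  rw [gaussianReal_of_var_ne_zero 0 one_ne_zero]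
  have : (gaussianPDF 0 1) = fun x => ((Real.toNNReal (gaussianPDFReal 0 1 x) : ℝ≥0) : ℝ≥0∞) := rfl
  rw [this, integral_withDensity_eq_integral_smul (measurable_gaussianPDFReal 0 1).real_toNNReal]
  have : ∫ x : ℝ, (Real.toNNReal (gaussianPDFReal 0 1 x)) • (x ^ 2)
      = ∫ x : ℝ, (Real.sqrt (2 * π))⁻¹ * (x ^ 2 * rexp (-(1/2 : ℝ) * x ^ 2)) := by
    congr 1; funext x; exact pdfReal_smul (fun y => y ^ 2) x
  rw [this, integral_const_mul, integral_sq_exp, inv_mul_cancel₀]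
  positivity

lemma measure_map_eval_pi {ι : Type*} [Fintype ι] {α : ι → Type*} [∀ i, MeasurableSpace (α i)]
    (μ : ∀ i, Measure (α i)) [∀ i, IsProbabilityMeasure (μ i)] (i : ι) :
    (Measure.pi μ).map (Function.eval i) = μ i := by
  ext s hs
  classical
  rw [Measure.map_apply (measurable_pi_apply i) hs, Set.eval_preimage, Measure.pi_pi]
  rw [Finset.prod_eq_single i]
  · simp
  · intro j _ hj; simp [Function.update_of_ne hj]
  · simp

lemma integrable_eval_sq (n : ℕ) (i : Fin n) :
    Integrable (fun y : Fin n → ℝ => (y i) ^ 2) (Measure.pi fun _ : Fin n => gaussianReal 0 1) := by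
  have h := integrable_sq_gaussian
  rw [← measure_map_eval_pi (fun _ : Fin n => gaussianReal 0 1) i] at h
  rw [integrable_map_measure h.aestronglyMeasurable
    (measurable_pi_apply i).aemeasurable] at h
  exact h

lemma integral_eval_sq (n : ℕ) (i : Fin n) :
    ∫ y : Fin n → ℝ, (y i) ^ 2 ∂(Measure.pi fun _ : Fin n => gaussianReal 0 1) = 1 := by
  have : ∫ y : Fin n → ℝ, (y i) ^ 2 ∂(Measure.pi fun _ : Fin n => gaussianReal 0 1)
      = ∫ x, x ^ 2 ∂((Measure.pi fun _ : Fin n => gaussianReal 0 1).map (Function.eval i)) := by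
    rw [integral_map (measurable_pi_apply i).aemeasurable]
    exact (measurable_id.pow_const 2).aestronglyMeasurable
  rw [this, measure_map_eval_pi, integral_sq_gaussian]


/-- The standard Gaussian measure on `ℝⁿ` (Euclidean space), the product over the `n`
coordinates of the real Gaussian measure with mean 0 and variance 1. -/
noncomputable def stdGaussian (n : ℕ) : Measure (EuclideanSpace ℝ (Fin n)) :=
  (Measure.pi fun _ : Fin n => gaussianReal 0 1).map
    (MeasurableEquiv.toLp 2 (Fin n → ℝ))

lemma integrable_norm_sq_pi (n : ℕ) :
    Integrable (fun y : Fin n → ℝ => ∑ i, (y i) ^ 2)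
      (Measure.pi fun _ : Fin n => gaussianReal 0 1) :=
  integrable_finset_sum _ (fun i _ => integrable_eval_sq n i)

lemma norm_symm_sq (n : ℕ) (y : Fin n → ℝ) :
    ‖(MeasurableEquiv.toLp 2 (Fin n → ℝ)) y‖ ^ 2 = ∑ i, (y i) ^ 2 := by
  rw [EuclideanSpace.norm_eq, Real.sq_sqrt (by positivity)]
  simp [sq_abs]

lemma integrable_norm_sq_stdGaussian (n : ℕ) :
    Integrable (fun ξ : EuclideanSpace ℝ (Fin n) => ‖ξ‖ ^ 2) (stdGaussian n) := by
  rw [_root_.stdGaussian, integrable_map_measure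
    (by exact (continuous_norm.pow 2).aestronglyMeasurable)
    (MeasurableEquiv.toLp 2 (Fin n → ℝ)).measurable.aemeasurable]
  exact (integrable_norm_sq_pi n).congr (Filter.Eventually.of_forall fun y =>
    (norm_symm_sq n y).symm)

lemma integral_norm_sq_stdGaussian (n : ℕ) :
    ∫ ξ, ‖ξ‖ ^ 2 ∂(stdGaussian n) = n := by
  rw [_root_.stdGaussian, integral_map
    (MeasurableEquiv.toLp 2 (Fin n → ℝ)).measurable.aemeasurable
    (by exact (continuous_norm.pow 2).aestronglyMeasurable)]
  have : ∫ y : Fin n → ℝ, ‖(MeasurableEquiv.toLp 2 (Fin n → ℝ)) y‖ ^ 2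
        ∂(Measure.pi fun _ : Fin n => gaussianReal 0 1)
      = ∫ y : Fin n → ℝ, ∑ i, (y i) ^ 2 ∂(Measure.pi fun _ : Fin n => gaussianReal 0 1) := by
    congr 1; funext y; exact norm_symm_sq n y
  rw [this, integral_finset_sum _ (fun i _ => integrable_eval_sq n i)]
  simp [integral_eval_sq]

theorem stmt6 (n : ℕ) (hn : 1 ≤ n) (f : EuclideanSpace ℝ (Fin n) → ℝ) (D : ℝ) (hD : 0 ≤ D)
    (hlip : ∀ x y : EuclideanSpace ℝ (Fin n), |f x - f y| ≤ D * ‖x - y‖)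
    (μ : ℝ) (hμ : 0 < μ) :
    ∀ x : EuclideanSpace ℝ (Fin n),
      (∫ ξ, ‖((f (x + μ • ξ) - f x) / μ) • ξ‖ ∂(stdGaussian n)) ≤ D * n := by
  intro x
  have hInt : Integrable (fun ξ : EuclideanSpace ℝ (Fin n) => D * ‖ξ‖ ^ 2) (stdGaussian n) :=
    (integrable_norm_sq_stdGaussian n).const_mul D
  have hbound : ∀ ξ : EuclideanSpace ℝ (Fin n),
      ‖((f (x + μ • ξ) - f x) / μ) • ξ‖ ≤ D * ‖ξ‖ ^ 2 := by
    intro ξ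
    rw [norm_smul, Real.norm_eq_abs, abs_div, abs_of_pos hμ]
    have h1 : |f (x + μ • ξ) - f x| ≤ D * (μ * ‖ξ‖) := by
      have h := hlip (x + μ • ξ) x
      rwa [add_sub_cancel_left, norm_smul, Real.norm_eq_abs, abs_of_pos hμ] at h
    have h2 : |f (x + μ • ξ) - f x| / μ ≤ D * ‖ξ‖ := by
      rw [div_le_iff₀ hμ]
      calc |f (x + μ • ξ) - f x| ≤ D * (μ * ‖ξ‖) := h1
        _ = D * ‖ξ‖ * μ := by ring
    calc |f (x + μ • ξ) - f x| / μ * ‖ξ‖ ≤ (D * ‖ξ‖) * ‖ξ‖ :=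
          mul_le_mul_of_nonneg_right h2 (norm_nonneg ξ)
      _ = D * ‖ξ‖ ^ 2 := by ring
  have := integral_mono_of_nonneg
    (Filter.Eventually.of_forall fun ξ => norm_nonneg _) hInt
    (Filter.Eventually.of_forall hbound)
  refine this.trans ?_
  rw [integral_const_mul, integral_norm_sq_stdGaussian]
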